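/- Let P be a partial latin square of order n whose filled cells all lie in the upper-left r×s rectangle R, with at most one empty cell of R per column, and suppose the Hall Inequality holds for the set H of cells in the top r rows. Then for every symbol σ, ν(σ) + ρ(σ) + n − s ≥ r, where ν(σ) is the number of occurrences of σ in R and ρ(σ) is the number of rows containing an empty cell of R supporting σ. -/

import Mathlib

open scoped Classical

section PLS

variable {n : ℕ}

/-- A partial latin square of order `n`: an `n × n` array of optional symbols,
no symbol occurring twice in any row or column. -/
def IsPLS (n : ℕ) (P : Fin n → Fin n → Option (Fin n)) : Prop :=
  (∀ i j j' σ, P i j = some σ → P i j' = some σ → j = j') ∧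
  (∀ i i' j σ, P i j = some σ → P i' j = some σ → i = i')

/-- `σ` is missing from row `i`. -/
def MissingRow (P : Fin n → Fin n → Option (Fin n)) (σ i : Fin n) : Prop :=
  ∀ j, P i j ≠ some σ

/-- `σ` is missing from column `j`. -/
def MissingCol (P : Fin n → Fin n → Option (Fin n)) (σ j : Fin n) : Prop :=
  ∀ i, P i j ≠ some σ

/-- A cell supports `σ` if it contains `σ`, or is empty and `σ` is missing from
its row and column. -/
def Supports (P : Fin n → Fin n → Option (Fin n)) (σ : Fin n) (c : Fin n × Fin n) : Prop :=
  P c.1 c.2 = some σ ∨ (P c.1 c.2 = none ∧ MissingRow P σ c.1 ∧ MissingCol P σ c.2)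

/-- A set of cells is independent if no two share a row or a column. -/
def IndepCells (S : Finset (Fin n × Fin n)) : Prop :=
  ∀ c ∈ S, ∀ c' ∈ S, c ≠ c' → c.1 ≠ c'.1 ∧ c.2 ≠ c'.2

/-- `alpha P σ T` : max size of an independent subset of `T` all of whose cells support `σ`. -/
noncomputable def alpha (P : Fin n → Fin n → Option (Fin n)) (σ : Fin n)
    (T : Finset (Fin n × Fin n)) : ℕ :=
  (T.powerset.filter (fun S => IndepCells S ∧ ∀ c ∈ S, Supports P σ c)).sup Finset.card

/-- Hall's Condition: every set of cells satisfies the Hall Inequality. -/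
def HallCond (n : ℕ) (P : Fin n → Fin n → Option (Fin n)) : Prop :=
  ∀ T : Finset (Fin n × Fin n), T.card ≤ ∑ σ : Fin n, alpha P σ T

/-- A latin square of order `n`. -/
def IsLatin (n : ℕ) (L : Fin n → Fin n → Fin n) : Prop :=
  (∀ i, Function.Injective (L i)) ∧ (∀ j, Function.Injective fun i => L i j)

/-- `L` is a completion of `P`. -/
def Completes (n : ℕ) (P : Fin n → Fin n → Option (Fin n)) (L : Fin n → Fin n → Fin n) : Prop :=
  IsLatin n L ∧ ∀ i j σ, P i j = some σ → L i j = σ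

end PLS

lemma card_filter_val_lt (n r : ℕ) (h : r ≤ n) :
    (Finset.univ.filter (fun i : Fin n => i.val < r)).card = r := by
  have hre : (Finset.range n).filter (· < r) = Finset.range r := by
    ext k; simp; omega
  calc (Finset.univ.filter (fun i : Fin n => i.val < r)).card
      = ((Finset.range n).filter (· < r)).card := by
        apply Finset.card_bij (fun i _ => i.val)
        · intro a ha; simp at ha ⊢; exact ha
        · intro a _ b _ hab; exact Fin.val_injective hab
        · intro b hb; simp at hb; exact ⟨⟨b, hb.1⟩, by simp [hb.2], rfl⟩
    _ = r := by rw [hre, Finset.card_range]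

lemma card_filter_val_not_lt (n s : ℕ) (h : s ≤ n) :
    (Finset.univ.filter (fun j : Fin n => ¬ j.val < s)).card = n - s := by
  have h1 := Finset.card_filter_add_card_filter_not
    (s := (Finset.univ : Finset (Fin n))) (p := fun j : Fin n => j.val < s)
  rw [card_filter_val_lt n s h] at h1
  simp only [Finset.card_univ, Fintype.card_fin] at h1
  omega

theorem stmt15 (n r s : ℕ) (hr : 1 ≤ r) (hrn : r ≤ n) (hs : 1 ≤ s) (hsn : s ≤ n)
    (P : Fin n → Fin n → Option (Fin n)) (hP : IsPLS n P)
    (hshape1 : ∀ i j : Fin n, P i j ≠ none → i.val < r ∧ j.val < s)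
    (hshape2 : ∀ j : Fin n, j.val < s →
      (Finset.univ.filter (fun i : Fin n => i.val < r ∧ P i j = none)).card ≤ 1)
    (H : Finset (Fin n × Fin n))
    (hH : H = Finset.univ.filter (fun c : Fin n × Fin n => c.1.val < r))
    (ν ρ : Fin n → ℕ)
    (hν : ∀ σ, ν σ = (Finset.univ.filter
      (fun c : Fin n × Fin n => P c.1 c.2 = some σ)).card)
    (hρ : ∀ σ, ρ σ = (Finset.univ.filter (fun i : Fin n =>
      ∃ c : Fin n × Fin n, c.1 = i ∧ c.1.val < r ∧ c.2.val < s ∧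
        P c.1 c.2 = none ∧ Supports P σ c)).card)
    (hHI : r * n ≤ ∑ σ : Fin n, alpha P σ H) :
    ∀ σ : Fin n, r ≤ ν σ + ρ σ + (n - s) := by
  intro σ
  have hn1 : 1 ≤ n := le_trans hr hrn
  have key : ∀ τ : Fin n, alpha P τ H ≤ r := by
    intro τ
    apply Finset.sup_le
    intro S hS
    simp only [Finset.mem_filter, Finset.mem_powerset] at hS
    obtain ⟨hSH, hind, _⟩ := hS
    calc S.card ≤ (Finset.univ.filter (fun i : Fin n => i.val < r)).card := by
          apply Finset.card_le_card_of_injOn Prod.fst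
          · intro c hc
            have := hSH hc; rw [hH] at this
            simp only [Finset.mem_coe, Finset.mem_filter, Finset.mem_univ, true_and] at this ⊢
            exact this
          · intro c hc c' hc' h
            by_contra hne
            exact (hind c hc c' hc' hne).1 h
      _ = r := card_filter_val_lt n r hrn
  have keyσ : alpha P σ H ≤ ν σ + ρ σ + (n - s) := by
    apply Finset.sup_le
    intro S hS
    simp only [Finset.mem_filter, Finset.mem_powerset] at hS
    obtain ⟨hSH, hind, hsup⟩ := hS
    set S1 := S.filter (fun c => P c.1 c.2 = some σ) with hS1
    set S2 := S.filter (fun c => ¬ P c.1 c.2 = some σ ∧ c.2.val < s) with hS2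
    set S3 := S.filter (fun c => ¬ P c.1 c.2 = some σ ∧ ¬ c.2.val < s) with hS3
    have hcover : S.card ≤ S1.card + S2.card + S3.card := by
      have hsub : S ⊆ S1 ∪ S2 ∪ S3 := by
        intro c hc
        simp only [Finset.mem_union, hS1, hS2, hS3, Finset.mem_filter]
        by_cases h1 : P c.1 c.2 = some σ
        · exact Or.inl (Or.inl ⟨hc, h1⟩)
        · by_cases h2 : c.2.val < s
          · exact Or.inl (Or.inr ⟨hc, h1, h2⟩)
          · exact Or.inr ⟨hc, h1, h2⟩
      calc S.card ≤ (S1 ∪ S2 ∪ S3).card := Finset.card_le_card hsub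
        _ ≤ (S1 ∪ S2).card + S3.card := Finset.card_union_le _ _
        _ ≤ S1.card + S2.card + S3.card := by
            have := Finset.card_union_le S1 S2; omega
    have h1 : S1.card ≤ ν σ := by
      rw [hν]
      apply Finset.card_le_card
      intro c hc
      simp only [hS1, Finset.mem_filter, Finset.mem_univ, true_and] at hc ⊢
      exact hc.2
    have h2 : S2.card ≤ ρ σ := by
      rw [hρ]
      apply Finset.card_le_card_of_injOn Prod.fst
      · intro c hc
        simp only [hS2, Finset.mem_coe, Finset.mem_filter, Finset.mem_univ, true_and] at hc ⊢
        obtain ⟨hcS, hne, hlt⟩ := hc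
        have hsupc := hsup c hcS
        have hnone : P c.1 c.2 = none := by
          rcases hsupc with h | h
          · exact absurd h hne
          · exact h.1
        have hcr : c.1.val < r := by
          have := hSH hcS; rw [hH] at this
          simpa using this
        exact ⟨c, rfl, hcr, hlt, hnone, hsupc⟩
      · intro c hc c' hc' h
        simp only [hS2, Finset.coe_filter, Set.mem_setOf_eq] at hc hc'
        by_contra hne
        exact (hind c hc.1 c' hc'.1 hne).1 h
    have h3 : S3.card ≤ n - s := by
      calc S3.card ≤ (Finset.univ.filter (fun j : Fin n => ¬ j.val < s)).card := by
            apply Finset.card_le_card_of_injOn Prod.snd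
            · intro c hc
              simp only [hS3, Finset.mem_coe, Finset.mem_filter, Finset.mem_univ, true_and] at hc ⊢
              exact hc.2.2
            · intro c hc c' hc' h
              simp only [hS3, Finset.coe_filter, Set.mem_setOf_eq] at hc hc'
              by_contra hne
              exact (hind c hc.1 c' hc'.1 hne).2 h
        _ = n - s := card_filter_val_not_lt n s hsn
    omega
  have hsum : ∑ τ : Fin n, alpha P τ H
      = alpha P σ H + ∑ τ ∈ Finset.univ.erase σ, alpha P τ H :=
    (Finset.add_sum_erase _ _ (Finset.mem_univ σ)).symm
  have herase : ∑ τ ∈ Finset.univ.erase σ, alpha P τ H ≤ (n - 1) * r := by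
    calc ∑ τ ∈ Finset.univ.erase σ, alpha P τ H
        ≤ (Finset.univ.erase σ).card * r :=
          Finset.sum_le_card_nsmul _ _ r (fun τ _ => key τ)
      _ = (n - 1) * r := by
          rw [Finset.card_erase_of_mem (Finset.mem_univ σ)]
          simp
  have hprod : (n - 1) * r + r = r * n := by
    have hn : n - 1 + 1 = n := by omega
    calc (n - 1) * r + r = ((n - 1) + 1) * r := by ring
      _ = n * r := by rw [hn]
      _ = r * n := Nat.mul_comm _ _
  have hα : r ≤ alpha P σ H := by
    rw [hsum] at hHI
    omega
  exact le_trans hα keyσ
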